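/- For every even integer x ≥ 4, there exist x − 1 Hamiltonian cycles of the complete graph K_x such that every edge of K_x lies in exactly two of these cycles (equivalently, the doubled complete graph 2K_x can be decomposed into Hamilton cycles). -/

import Mathlib

namespace HamDecomp

/-- The Walecki zigzag successor function on `ZMod (2m-1)`, in "relative" natural
coordinates `d ∈ [0, 2m-1)`.  `none` denotes going to the extra vertex `∞`. -/
def F (m d : ℕ) : Option ℕ :=
  if d = 0 then some 1
  else if d < m then some (2*m-1 - d)
  else if d = m then none
  else some (2*m - d)

/-- Inverse of `F`. -/
def G (m c : ℕ) : Option ℕ :=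
  if c = 0 then none
  else if c = 1 then some 0
  else if c < m then some (2*m - c)
  else some (2*m-1 - c)

lemma F_m (m : ℕ) (hm : 2 ≤ m) : F m m = none := by
  unfold F; split_ifs <;> first | rfl | omega

lemma G_zero (m : ℕ) : G m 0 = none := by simp [G]

lemma F_eq_none_iff (m : ℕ) (hm : 2 ≤ m) (d : ℕ) : F m d = none ↔ d = m := by
  unfold F; split_ifs <;> simp <;> omega

lemma F_lt (m : ℕ) (hm : 2 ≤ m) {d c : ℕ} (hd : d < 2*m-1) (h : F m d = some c) :
    c < 2*m-1 := by
  unfold F at h; split_ifs at h <;> simp_all <;> omega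

lemma F_ne (m : ℕ) (hm : 2 ≤ m) {d c : ℕ} (hd : d < 2*m-1) (h : F m d = some c) :
    c ≠ d := by
  unfold F at h; split_ifs at h <;> simp_all <;> omega

lemma GF (m : ℕ) (hm : 2 ≤ m) {d : ℕ} (hd : d < 2*m-1) (hdm : d ≠ m) :
    ∃ c, F m d = some c ∧ c < 2*m-1 ∧ G m c = some d := by
  unfold F
  split_ifs with h1 h2
  · subst h1; exact ⟨1, rfl, by omega, by unfold G; norm_num⟩
  · refine ⟨2*m-1-d, rfl, by omega, ?_⟩
    unfold G
    rw [if_neg (by omega), if_neg (by omega), if_neg (by omega)]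
    congr 1; omega
  · refine ⟨2*m-d, rfl, by omega, ?_⟩
    unfold G
    rw [if_neg (by omega), if_neg (by omega), if_pos (by omega)]
    congr 1; omega

lemma FG (m : ℕ) (hm : 2 ≤ m) {c : ℕ} (hc : c < 2*m-1) (hc0 : c ≠ 0) :
    ∃ d, G m c = some d ∧ d < 2*m-1 ∧ d ≠ m ∧ F m d = some c := by
  unfold G
  split_ifs with h1 h2 h3
  · exact absurd h1 hc0
  · subst h2; exact ⟨0, rfl, by omega, by omega, by unfold F; norm_num⟩
  · refine ⟨2*m-c, rfl, by omega, by omega, ?_⟩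
    unfold F
    rw [if_neg (by omega), if_neg (by omega), if_neg (by omega)]
    congr 1; omega
  · refine ⟨2*m-1-c, rfl, by omega, by omega, ?_⟩
    unfold F
    rw [if_neg (by omega), if_pos (by omega)]
    congr 1; omega

lemma FF (m : ℕ) (hm : 2 ≤ m) {d c c' : ℕ} (hd : d < 2*m-1)
    (h1 : F m d = some c) (h2 : F m c = some c') : c' ≠ d := by
  unfold F at h1 h2; split_ifs at h1 h2 <;> simp_all <;> omega

lemma mod_two_lt {a b : ℕ} (h : a < 2*b) :
    a % b = if a < b then a else a - b := by
  split_ifs with h1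
  · exact Nat.mod_eq_of_lt h1
  · rw [Nat.mod_eq_sub_mod (by omega), Nat.mod_eq_of_lt (by omega)]

lemma solve_odd (m : ℕ) (hm : 2 ≤ m) (k d : ℕ) (hk : k + 2 ≤ m) (hd : d < 2*m-1) :
    F m d = some ((d + (2*k+1)) % (2*m-1)) ↔
      (d = m-1-k ∨ d = (2*m-1-k) % (2*m-1)) := by
  rw [mod_two_lt (by omega), mod_two_lt (by omega)]
  unfold F; split_ifs <;> simp <;> omega

lemma solve_even (m : ℕ) (hm : 2 ≤ m) (k d : ℕ) (hk : 1 ≤ k) (hk2 : 2*k < 2*m-1)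
    (hd : d < 2*m-1) : ¬ F m d = some ((d + 2*k) % (2*m-1)) := by
  rw [mod_two_lt (by omega)]
  unfold F; split_ifs <;> simp <;> omega



/-! ### The cycles, on the vertex set `Option (ZMod (2m-1))` -/

/-- The `i`-th Walecki Hamiltonian cycle successor function. -/
def f (m : ℕ) (i : ZMod (2*m-1)) :
    Option (ZMod (2*m-1)) → Option (ZMod (2*m-1))
  | none => some i
  | some u => (F m (u - i).val).map (fun c : ℕ => (c : ZMod (2*m-1)) + i)

/-- Inverse of `f`. -/
def g (m : ℕ) (i : ZMod (2*m-1)) :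
    Option (ZMod (2*m-1)) → Option (ZMod (2*m-1))
  | none => some ((m : ZMod (2*m-1)) + i)
  | some u => (G m (u - i).val).map (fun c : ℕ => (c : ZMod (2*m-1)) + i)

lemma f_none (m : ℕ) (i : ZMod (2*m-1)) : f m i none = some i := rfl

lemma f_some (m : ℕ) (i u : ZMod (2*m-1)) :
    f m i (some u) = (F m (u - i).val).map (fun c : ℕ => (c : ZMod (2*m-1)) + i) := rfl

lemma g_none (m : ℕ) (i : ZMod (2*m-1)) : g m i none = some ((m : ZMod (2*m-1)) + i) := rfl

lemma g_some (m : ℕ) (i u : ZMod (2*m-1)) :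
    g m i (some u) = (G m (u - i).val).map (fun c : ℕ => (c : ZMod (2*m-1)) + i) := rfl

section
variable {m : ℕ} (hm : 2 ≤ m)
include hm

lemma NZ : NeZero (2*m-1) := ⟨by omega⟩

lemma val_eq_iff (u : ZMod (2*m-1)) {c : ℕ} (hc : c < 2*m-1) :
    u.val = c ↔ u = (c : ZMod (2*m-1)) := by
  haveI := NZ hm
  constructor
  · intro h; rw [← h, ZMod.natCast_rightInverse u]
  · intro h; rw [h, ZMod.val_cast_of_lt hc]

lemma f_some_eq_some_iff (i u v : ZMod (2*m-1)) :
    f m i (some u) = some v ↔ F m ((u - i).val) = some ((v - i).val) := by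
  haveI := NZ hm
  rw [f_some]
  cases h : F m ((u - i).val) with
  | none => simp
  | some c =>
    have hc : c < 2*m-1 := F_lt m hm (ZMod.val_lt _) h
    simp only [Option.map_some, Option.some.injEq]
    constructor
    · rintro rfl
      rw [add_sub_cancel_right, ZMod.val_cast_of_lt hc]
    · intro hv
      rw [hv, ZMod.natCast_rightInverse (v - i)]
      ring
lemma f_some_eq_none_iff (i u : ZMod (2*m-1)) :
    f m i (some u) = none ↔ (u - i).val = m := by
  rw [f_some, Option.map_eq_none_iff, F_eq_none_iff m hm]

lemma g_f (i : ZMod (2*m-1)) : ∀ w, g m i (f m i w) = w := by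
  haveI := NZ hm
  intro w
  cases w with
  | none =>
    show g m i (some i) = none
    rw [g_some, sub_self, ZMod.val_zero, G_zero]
    rfl
  | some u =>
    rcases eq_or_ne ((u - i).val) m with h | h
    · rw [(f_some_eq_none_iff hm i u).2 h, g_none]
      have h1 : u - i = (m : ZMod (2*m-1)) := (val_eq_iff hm _ (by omega)).1 h
      have h2 : (m : ZMod (2*m-1)) + i = u := by rw [← h1]; ring
      rw [h2]
    · obtain ⟨c, hFc, hc, hGc⟩ := GF m hm (ZMod.val_lt (u - i)) h
      have h1 : f m i (some u) = some ((c : ZMod (2*m-1)) + i) := by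
        rw [f_some, hFc]; rfl
      rw [h1, g_some]
      have hval : ((c : ZMod (2*m-1)) + i - i).val = c := by
        rw [add_sub_cancel_right, ZMod.val_cast_of_lt hc]
      rw [hval, hGc]
      simp only [Option.map_some, Option.some.injEq]
      rw [ZMod.natCast_rightInverse (u - i)]
      ring

lemma f_g (i : ZMod (2*m-1)) : ∀ w, f m i (g m i w) = w := by
  haveI := NZ hm
  intro w
  cases w with
  | none =>
    show f m i (some ((m : ZMod (2*m-1)) + i)) = none
    rw [f_some_eq_none_iff hm, add_sub_cancel_right, ZMod.val_cast_of_lt (by omega)]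
  | some u =>
    rcases eq_or_ne ((u - i).val) 0 with h | h
    · have hu : u = i := by
        have h1 : u - i = ((0:ℕ) : ZMod (2*m-1)) := (val_eq_iff hm (u - i) (by omega)).1 h
        rw [Nat.cast_zero, sub_eq_zero] at h1
        exact h1
      subst hu
      rw [g_some, sub_self, ZMod.val_zero, G_zero]
      rfl
    · obtain ⟨d, hGd, hd, hdm, hFd⟩ := FG m hm (ZMod.val_lt (u - i)) h
      have h1 : g m i (some u) = some ((d : ZMod (2*m-1)) + i) := by
        rw [g_some, hGd]; rfl
      rw [h1, f_some_eq_some_iff hm]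
      have hval : ((d : ZMod (2*m-1)) + i - i).val = d := by
        rw [add_sub_cancel_right, ZMod.val_cast_of_lt hd]
      rw [hval, hFd]

lemma f_ne (i : ZMod (2*m-1)) : ∀ w, f m i w ≠ w := by
  haveI := NZ hm
  intro w
  cases w with
  | none => rw [f_none]; simp
  | some u =>
    rcases eq_or_ne ((u - i).val) m with h | h
    · rw [(f_some_eq_none_iff hm i u).2 h]; simp
    · intro hcon
      rw [f_some_eq_some_iff hm] at hcon
      exact F_ne m hm (ZMod.val_lt _) hcon rfl

lemma ff_ne (i : ZMod (2*m-1)) : ∀ w, f m i (f m i w) ≠ w := by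
  haveI := NZ hm
  intro w
  cases w with
  | none =>
    show f m i (some i) ≠ none
    have hF0 : F m 0 = some 1 := by norm_num [F]
    rw [f_some, sub_self, ZMod.val_zero, hF0]
    simp
  | some u =>
    rcases eq_or_ne ((u - i).val) m with h | h
    · rw [(f_some_eq_none_iff hm i u).2 h, f_none]
      intro hcon
      simp only [Option.some.injEq] at hcon
      rw [← hcon, sub_self, ZMod.val_zero] at h
      omega
    · cases hf : f m i (some u) with
      | none => exact absurd ((f_some_eq_none_iff hm i u).1 hf) h
      | some v =>
        have hFv := (f_some_eq_some_iff hm i u v).1 hf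
        rcases eq_or_ne ((v - i).val) m with h2 | h2
        · rw [(f_some_eq_none_iff hm i v).2 h2]
          simp
        · intro hcon
          rw [f_some_eq_some_iff hm i v u] at hcon
          exact FF m hm (ZMod.val_lt _) hFv hcon rfl

end


/-! ### Graph-level lemmas -/

open SimpleGraph

/-- The edge set of the `i`-th Hamiltonian cycle. -/
def D (m : ℕ) (i : ZMod (2*m-1)) : Set (Sym2 (Option (ZMod (2*m-1)))) :=
  {e | ∃ w, e = s(w, f m i w)}

lemma mem_D (m : ℕ) (i : ZMod (2*m-1)) (a b : Option (ZMod (2*m-1))) :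
    s(a, b) ∈ D m i ↔ f m i a = b ∨ f m i b = a := by
  constructor
  · rintro ⟨w, hw⟩
    rw [Sym2.eq_iff] at hw
    rcases hw with ⟨rfl, rfl⟩ | ⟨h1, rfl⟩
    · exact Or.inl rfl
    · exact Or.inr h1.symm
  · rintro (h | h)
    · exact ⟨a, by rw [h]⟩
    · exact ⟨b, by rw [h, Sym2.eq_swap]⟩

lemma adj_D (m : ℕ) (i : ZMod (2*m-1)) (a b : Option (ZMod (2*m-1))) :
    (fromEdgeSet (D m i)).Adj a b ↔ (f m i a = b ∨ f m i b = a) ∧ a ≠ b := by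
  rw [SimpleGraph.fromEdgeSet_adj, mem_D]

section
variable {m : ℕ} (hm : 2 ≤ m)
include hm

lemma nbhd (i : ZMod (2*m-1)) (a : Option (ZMod (2*m-1))) :
    {b | (fromEdgeSet (D m i)).Adj a b} = {f m i a, g m i a} := by
  ext b
  simp only [Set.mem_setOf_eq, adj_D, Set.mem_insert_iff, Set.mem_singleton_iff]
  constructor
  · rintro ⟨h | h, hne⟩
    · exact Or.inl h.symm
    · right; rw [← h, g_f hm i b]
  · rintro (rfl | rfl)
    · exact ⟨Or.inl rfl, Ne.symm (f_ne hm i a)⟩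
    · refine ⟨Or.inr (f_g hm i a), ?_⟩
      intro hcon
      have h1 := f_g hm i a
      rw [← hcon] at h1
      exact f_ne hm i a h1

lemma deg (i : ZMod (2*m-1)) (a : Option (ZMod (2*m-1))) :
    {b | (fromEdgeSet (D m i)).Adj a b}.ncard = 2 := by
  rw [nbhd hm]
  apply Set.ncard_pair
  intro hcon
  have h1 := f_g hm i a
  rw [← hcon] at h1
  exact ff_ne hm i a h1

lemma adj_self_f (i : ZMod (2*m-1)) (w : Option (ZMod (2*m-1))) :
    (fromEdgeSet (D m i)).Adj w (f m i w) :=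
  (adj_D m i w _).2 ⟨Or.inl rfl, Ne.symm (f_ne hm i w)⟩

lemma neg_cast_val (t : ℕ) (h1 : 1 ≤ t) (h2 : t < 2*m-1) :
    (-(t : ZMod (2*m-1))).val = 2*m-1-t := by
  haveI := NZ hm
  have e : -(t : ZMod (2*m-1)) = ((2*m-1-t : ℕ) : ZMod (2*m-1)) := by
    have h3 : ((2*m-1-t : ℕ) : ZMod (2*m-1)) + (t : ZMod (2*m-1)) = 0 := by
      rw [← Nat.cast_add]
      have h4 : (2*m-1-t) + t = 2*m-1 := by omega
      rw [h4, ZMod.natCast_self]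
    exact (eq_neg_of_add_eq_zero_left h3).symm
  rw [e, ZMod.val_cast_of_lt (by omega)]

lemma val_neg' (a : ZMod (2*m-1)) (h : a ≠ 0) : (-a).val = 2*m-1 - a.val := by
  haveI := NZ hm
  have h1 : 1 ≤ a.val := by
    rcases Nat.eq_zero_or_pos a.val with h0 | h0
    · exact absurd (ZMod.val_eq_zero a |>.1 h0) h
    · omega
  have := neg_cast_val hm a.val h1 (ZMod.val_lt a)
  rwa [ZMod.natCast_rightInverse a] at this

lemma reach_from_none (i : ZMod (2*m-1)) :
    ∀ b, (fromEdgeSet (D m i)).Reachable none b := by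
  haveI := NZ hm
  have key : ∀ t : ℕ, t ≤ m - 1 →
      (fromEdgeSet (D m i)).Reachable none (some ((t : ZMod (2*m-1)) + i)) ∧
      (fromEdgeSet (D m i)).Reachable none (some (-(t : ZMod (2*m-1)) + i)) := by
    intro t
    induction t with
    | zero =>
      intro _
      have h0 : (fromEdgeSet (D m i)).Reachable none (some i) :=
        (adj_self_f hm i none).reachable
      constructor <;> simpa using h0
    | succ t ih =>
      intro ht
      obtain ⟨h1, h2⟩ := ih (by omega)
      have hA : f m i (some (-(t : ZMod (2*m-1)) + i)) =
          some (((t+1 : ℕ) : ZMod (2*m-1)) + i) := by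
        rw [f_some_eq_some_iff hm]
        have e1 : (-(t : ZMod (2*m-1)) + i - i) = -(t : ZMod (2*m-1)) := by ring
        have e2 : (((t+1 : ℕ) : ZMod (2*m-1)) + i - i) = ((t+1 : ℕ) : ZMod (2*m-1)) := by
          ring
        rw [e1, e2, ZMod.val_cast_of_lt (show t+1 < 2*m-1 by omega)]
        rcases Nat.eq_zero_or_pos t with rfl | htpos
        · simp only [Nat.cast_zero, neg_zero, ZMod.val_zero]
          norm_num [F]
        · rw [neg_cast_val hm t htpos (by omega)]
          unfold F
          rw [if_neg (by omega), if_neg (by omega), if_neg (by omega)]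
          congr 1
          omega
      have hB : f m i (some (((t+1 : ℕ) : ZMod (2*m-1)) + i)) =
          some (-((t+1 : ℕ) : ZMod (2*m-1)) + i) := by
        rw [f_some_eq_some_iff hm]
        have e1 : (((t+1 : ℕ) : ZMod (2*m-1)) + i - i) = ((t+1 : ℕ) : ZMod (2*m-1)) := by
          ring
        have e2 : (-((t+1 : ℕ) : ZMod (2*m-1)) + i - i) = -((t+1 : ℕ) : ZMod (2*m-1)) := by
          ring
        rw [e1, e2, ZMod.val_cast_of_lt (show t+1 < 2*m-1 by omega),
          neg_cast_val hm (t+1) (by omega) (by omega)]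
        unfold F
        rw [if_neg (by omega), if_pos (by omega)]
      have rA : (fromEdgeSet (D m i)).Reachable (some (-(t : ZMod (2*m-1)) + i))
          (some (((t+1 : ℕ) : ZMod (2*m-1)) + i)) := by
        have h := (adj_self_f hm i (some (-(t : ZMod (2*m-1)) + i))).reachable
        rwa [hA] at h
      have rB : (fromEdgeSet (D m i)).Reachable (some (((t+1 : ℕ) : ZMod (2*m-1)) + i))
          (some (-((t+1 : ℕ) : ZMod (2*m-1)) + i)) := by
        have h := (adj_self_f hm i (some (((t+1 : ℕ) : ZMod (2*m-1)) + i))).reachable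
        rwa [hB] at h
      exact ⟨h2.trans rA, (h2.trans rA).trans rB⟩
  intro b
  cases b with
  | none => exact Reachable.refl none
  | some w =>
    rcases le_or_gt ((w - i).val) (m-1) with hle | hgt
    · have hw : w = (((w - i).val : ℕ) : ZMod (2*m-1)) + i := by
        rw [ZMod.natCast_rightInverse (w - i)]; ring
      rw [hw]
      exact (key _ hle).1
    · have hlt := ZMod.val_lt (w - i)
      set t : ℕ := 2*m-1 - (w - i).val with hdef
      have h1 : 1 ≤ t ∧ t ≤ m - 1 := by omega
      have hw : w = -((t : ℕ) : ZMod (2*m-1)) + i := by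
        have e : -((t : ℕ) : ZMod (2*m-1)) = (((w - i).val : ℕ) : ZMod (2*m-1)) := by
          have h3 : (((w-i).val : ℕ) : ZMod (2*m-1)) + ((t : ℕ) : ZMod (2*m-1)) = 0 := by
            rw [← Nat.cast_add]
            have h4 : (w-i).val + t = 2*m-1 := by omega
            rw [h4, ZMod.natCast_self]
          exact (eq_neg_of_add_eq_zero_left h3).symm
        rw [e, ZMod.natCast_rightInverse (w - i)]; ring
      rw [hw]
      exact (key t h1.2).2

lemma reach_all (i : ZMod (2*m-1)) (a b : Option (ZMod (2*m-1))) :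
    (fromEdgeSet (D m i)).Reachable a b :=
  (reach_from_none hm i a).symm.trans (reach_from_none hm i b)

lemma comp_card (i : ZMod (2*m-1)) (a : Option (ZMod (2*m-1))) :
    {b | (fromEdgeSet (D m i)).Reachable a b}.ncard = 2*m := by
  haveI := NZ hm
  have h : {b | (fromEdgeSet (D m i)).Reachable a b} = Set.univ :=
    Set.eq_univ_of_forall (fun b => reach_all hm i a b)
  rw [h, Set.ncard_univ, Nat.card_eq_fintype_card, Fintype.card_option, ZMod.card]
  omega

end


/-! ### Edge counting -/

section
variable {m : ℕ} (hm : 2 ≤ m)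
include hm

lemma count_inf (v : ZMod (2*m-1)) :
    {j : ZMod (2*m-1) | s(none, some v) ∈ D m j} =
      {v, v - ((m : ℕ) : ZMod (2*m-1))} := by
  haveI := NZ hm
  ext j
  simp only [Set.mem_setOf_eq, mem_D, f_none, Set.mem_insert_iff, Set.mem_singleton_iff]
  constructor
  · rintro (h | h)
    · left
      exact (Option.some.injEq _ _ ▸ h : some j = some v) |> fun h' => by
        injection h'
    · right
      rw [f_some_eq_none_iff hm] at h
      have h2 : v - j = ((m : ℕ) : ZMod (2*m-1)) :=
        (val_eq_iff hm _ (by omega)).1 h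
      linear_combination -h2
  · rintro (rfl | rfl)
    · exact Or.inl rfl
    · right
      rw [f_some_eq_none_iff hm]
      have e : v - (v - ((m : ℕ) : ZMod (2*m-1))) = ((m : ℕ) : ZMod (2*m-1)) := by ring
      rw [e, ZMod.val_cast_of_lt (by omega)]

lemma count_pair (u v : ZMod (2*m-1)) (k : ℕ) (hk : k + 2 ≤ m)
    (hval : (v - u).val = 2*k+1) :
    {j : ZMod (2*m-1) | s(some u, some v) ∈ D m j} =
      {u - ((m-1-k : ℕ) : ZMod (2*m-1)), u + ((k : ℕ) : ZMod (2*m-1))} := by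
  haveI := NZ hm
  ext j
  simp only [Set.mem_setOf_eq, mem_D, Set.mem_insert_iff, Set.mem_singleton_iff]
  rw [f_some_eq_some_iff hm, f_some_eq_some_iff hm]
  have hvj : (v - j).val = ((u - j).val + (2*k+1)) % (2*m-1) := by
    have e : v - j = (u - j) + (v - u) := by ring
    rw [e, ZMod.val_add, hval]
  have hne : v - u ≠ 0 := by
    intro hcon; rw [hcon, ZMod.val_zero] at hval; omega
  have huv : (u - v).val = 2*(m-1-k) := by
    have e : u - v = -(v - u) := by ring
    rw [e, val_neg' hm _ hne, hval]
    omega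
  have huj : (u - j).val = ((v - j).val + 2*(m-1-k)) % (2*m-1) := by
    have e : u - j = (v - j) + (u - v) := by ring
    rw [e, ZMod.val_add, huv]
  constructor
  · rintro (h | h)
    · rw [hvj] at h
      rcases (solve_odd m hm k ((u - j).val) hk (ZMod.val_lt _)).1 h with h1 | h1
      · left
        have h2 : u - j = ((m-1-k : ℕ) : ZMod (2*m-1)) :=
          (val_eq_iff hm _ (by omega)).1 h1
        linear_combination -h2
      · right
        have hlt : (2*m-1-k) % (2*m-1) < 2*m-1 := Nat.mod_lt _ (by omega)
        have h2 : u - j = (((2*m-1-k) % (2*m-1) : ℕ) : ZMod (2*m-1)) :=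
          (val_eq_iff hm _ hlt).1 h1
        rw [ZMod.natCast_mod] at h2
        have h3 : ((2*m-1-k : ℕ) : ZMod (2*m-1)) = -((k : ℕ) : ZMod (2*m-1)) := by
          apply eq_neg_of_add_eq_zero_left
          rw [← Nat.cast_add]
          have e : (2*m-1-k) + k = 2*m-1 := by omega
          rw [e, ZMod.natCast_self]
        rw [h3] at h2
        linear_combination -h2
    · exfalso
      rw [huj] at h
      exact solve_even m hm (m-1-k) ((v - j).val) (by omega) (by omega)
        (ZMod.val_lt _) h
  · rintro (rfl | rfl)
    · left
      rw [hvj]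
      have hd : (u - (u - ((m-1-k : ℕ) : ZMod (2*m-1)))).val = m-1-k := by
        have e : u - (u - ((m-1-k : ℕ) : ZMod (2*m-1))) = ((m-1-k : ℕ) : ZMod (2*m-1)) := by
          ring
        rw [e, ZMod.val_cast_of_lt (by omega)]
      rw [hd]
      exact (solve_odd m hm k (m-1-k) hk (by omega)).2 (Or.inl rfl)
    · left
      rw [hvj]
      have hd : (u - (u + ((k : ℕ) : ZMod (2*m-1)))).val = (2*m-1-k) % (2*m-1) := by
        have e : u - (u + ((k : ℕ) : ZMod (2*m-1))) = -((k : ℕ) : ZMod (2*m-1)) := by ring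
        rcases Nat.eq_zero_or_pos k with rfl | hk1
        · rw [e]
          simp [Nat.mod_self]
        · rw [e, neg_cast_val hm k hk1 (by omega), Nat.mod_eq_of_lt (by omega)]
      rw [hd]
      exact (solve_odd m hm k _ hk (Nat.mod_lt _ (by omega))).2 (Or.inr rfl)

lemma count (a b : Option (ZMod (2*m-1))) (hab : a ≠ b) :
    {j : ZMod (2*m-1) | s(a, b) ∈ D m j}.ncard = 2 := by
  haveI := NZ hm
  have hm0 : ((m : ℕ) : ZMod (2*m-1)) ≠ 0 := by
    intro hcon
    have h := ZMod.val_cast_of_lt (show m < 2*m-1 by omega)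
    rw [hcon, ZMod.val_zero] at h
    omega
  have main : ∀ u v : ZMod (2*m-1), ∀ k : ℕ, k + 2 ≤ m → (v - u).val = 2*k+1 →
      {j : ZMod (2*m-1) | s(some u, some v) ∈ D m j}.ncard = 2 := by
    intro u v k hk hval
    rw [count_pair hm u v k hk hval]
    apply Set.ncard_pair
    intro hcon
    have h1 : ((m-1-k : ℕ) : ZMod (2*m-1)) + ((k : ℕ) : ZMod (2*m-1)) = 0 := by
      linear_combination -hcon
    rw [← Nat.cast_add] at h1
    have h2 : (m-1-k) + k = m-1 := by omega
    rw [h2] at h1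
    have h3 := ZMod.val_cast_of_lt (show m-1 < 2*m-1 by omega)
    rw [h1, ZMod.val_zero] at h3
    omega
  have inf_case : ∀ v : ZMod (2*m-1),
      {j : ZMod (2*m-1) | s(none, some v) ∈ D m j}.ncard = 2 := by
    intro v
    rw [count_inf hm v]
    apply Set.ncard_pair
    intro hcon
    exact hm0 (by linear_combination hcon)
  match a, b with
  | none, none => exact absurd rfl hab
  | none, some v => exact inf_case v
  | some u, none =>
    have hs : {j : ZMod (2*m-1) | s(some u, none) ∈ D m j} =
        {j : ZMod (2*m-1) | s(none, some u) ∈ D m j} := by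
      ext j; rw [Sym2.eq_swap]
    rw [hs]
    exact inf_case u
  | some u, some v =>
    have huv : u ≠ v := fun h => hab (by rw [h])
    have hne : v - u ≠ 0 := sub_ne_zero.2 (Ne.symm huv)
    have hv1 : 1 ≤ (v - u).val := by
      rcases Nat.eq_zero_or_pos (v - u).val with h0 | h0
      · exact absurd ((ZMod.val_eq_zero _).1 h0) hne
      · omega
    have hv2 : (v - u).val < 2*m-1 := ZMod.val_lt _
    rcases Nat.even_or_odd ((v - u).val) with he | ho
    · obtain ⟨k2, hk2⟩ := he
      have hval' : (u - v).val = 2*(m-1-k2)+1 := by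
        have e : u - v = -(v - u) := by ring
        rw [e, val_neg' hm _ hne]
        omega
      have hs : {j : ZMod (2*m-1) | s(some u, some v) ∈ D m j} =
          {j : ZMod (2*m-1) | s(some v, some u) ∈ D m j} := by
        ext j; rw [Sym2.eq_swap]
      rw [hs]
      exact main v u (m-1-k2) (by omega) hval'
    · obtain ⟨k, hk⟩ := ho
      exact main u v k (by omega) hk

end


/-! ### Transport along an equivalence -/

section transport

variable {V W' : Type*} (φ : V ≃ W') (E : Set (Sym2 V))

lemma mem_map_image (a b : W') :
    s(a, b) ∈ Sym2.map ⇑φ '' E ↔ s(φ.symm a, φ.symm b) ∈ E := by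
  constructor
  · rintro ⟨z, hz, h⟩
    have h2 := congrArg (Sym2.map ⇑φ.symm) h
    rw [Sym2.map_map, Equiv.symm_comp_self, Sym2.map_id, Sym2.map_pair_eq] at h2
    simp only [id_eq] at h2
    exact h2 ▸ hz
  · intro h
    refine ⟨s(φ.symm a, φ.symm b), h, ?_⟩
    rw [Sym2.map_pair_eq]
    simp

lemma adj_map_image (a b : W') :
    (SimpleGraph.fromEdgeSet (Sym2.map ⇑φ '' E)).Adj a b ↔
      (SimpleGraph.fromEdgeSet E).Adj (φ.symm a) (φ.symm b) := by
  rw [SimpleGraph.fromEdgeSet_adj, SimpleGraph.fromEdgeSet_adj, mem_map_image]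
  exact and_congr Iff.rfl (φ.symm.injective.ne_iff).symm

/-- Homomorphism from the base graph into the transported graph. -/
def homMap : SimpleGraph.fromEdgeSet E →g SimpleGraph.fromEdgeSet (Sym2.map ⇑φ '' E) where
  toFun := ⇑φ
  map_rel' := by
    intro a b h
    rw [adj_map_image]
    simpa using h

@[simp] lemma homMap_apply (v : V) : homMap φ E v = φ v := rfl

end transport
end HamDecomp


/-- `E` is a `C_m`-factor: in the graph with edge set `E`, every vertex has exactly
two neighbours and every connected component has exactly `m` vertices.  For `m` the
number of vertices of the ambient type, this says `E` is a Hamiltonian cycle. -/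
def IsCycleFactor {V : Type*} (E : Set (Sym2 V)) (m : ℕ) : Prop :=
  (∀ a : V, {b | (SimpleGraph.fromEdgeSet E).Adj a b}.ncard = 2) ∧
  (∀ a : V, {b | (SimpleGraph.fromEdgeSet E).Reachable a b}.ncard = m)

theorem doubled_complete_graph_hamilton_decomposition (x : ℕ) (hx : 4 ≤ x)
    (hev : Even x) :
    ∃ C : Fin (x - 1) → Set (Sym2 (Fin x)),
      (∀ i, C i ⊆ (⊤ : SimpleGraph (Fin x)).edgeSet) ∧
      (∀ i, IsCycleFactor (C i) x) ∧
      (∀ e ∈ (⊤ : SimpleGraph (Fin x)).edgeSet, {i | e ∈ C i}.ncard = 2) := by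
  classical
  obtain ⟨m, hxm⟩ := hev
  have hm : 2 ≤ m := by omega
  haveI : NeZero (2*m-1) := ⟨by omega⟩
  have hcard1 : Fintype.card (Fin x) = Fintype.card (Option (ZMod (2*m-1))) := by
    rw [Fintype.card_fin, Fintype.card_option, ZMod.card]
    omega
  have hcard2 : Fintype.card (Fin (x-1)) = Fintype.card (ZMod (2*m-1)) := by
    rw [Fintype.card_fin, ZMod.card]
    omega
  set φ : Fin x ≃ Option (ZMod (2*m-1)) := Fintype.equivOfCardEq hcard1 with hφ
  set ι : Fin (x-1) ≃ ZMod (2*m-1) := Fintype.equivOfCardEq hcard2 with hι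
  set ψ : Option (ZMod (2*m-1)) ≃ Fin x := φ.symm with hψ
  refine ⟨fun i => Sym2.map ⇑ψ '' HamDecomp.D m (ι i), ?_, ?_, ?_⟩
  · -- each cycle consists of genuine edges of `K_x`
    intro i e he
    rw [SimpleGraph.edgeSet_top]
    obtain ⟨z, hz, rfl⟩ := he
    obtain ⟨w, rfl⟩ := hz
    simp only [Set.mem_setOf_eq, Sym2.map_pair_eq, Sym2.mk_isDiag_iff]
    intro hcon
    exact HamDecomp.f_ne hm (ι i) w (ψ.injective hcon).symm
  · -- each cycle is a Hamiltonian cycle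
    intro i
    constructor
    · intro a
      have hset : {b | (SimpleGraph.fromEdgeSet (Sym2.map ⇑ψ '' HamDecomp.D m (ι i))).Adj a b}
          = ⇑ψ '' {b0 | (SimpleGraph.fromEdgeSet (HamDecomp.D m (ι i))).Adj (ψ.symm a) b0} := by
        ext b
        simp only [Set.mem_setOf_eq, Set.mem_image]
        constructor
        · intro h
          exact ⟨ψ.symm b, (HamDecomp.adj_map_image ψ _ a b).1 h, by simp⟩
        · rintro ⟨b0, hb0, rfl⟩
          rw [HamDecomp.adj_map_image ψ]
          simpa using hb0
      rw [hset, Set.ncard_image_of_injective _ ψ.injective, HamDecomp.deg hm]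
    · intro a
      have hset : {b | (SimpleGraph.fromEdgeSet (Sym2.map ⇑ψ '' HamDecomp.D m (ι i))).Reachable a b}
          = Set.univ := by
        apply Set.eq_univ_of_forall
        intro b
        have h := (HamDecomp.reach_all hm (ι i) (ψ.symm a) (ψ.symm b)).map
          (HamDecomp.homMap ψ (HamDecomp.D m (ι i)))
        simpa using h
      rw [hset, Set.ncard_univ, Nat.card_eq_fintype_card, Fintype.card_fin]
  · -- each edge of `K_x` lies on exactly two of the cycles
    intro e he
    induction e using Sym2.ind with
    | _ a b =>
      rw [SimpleGraph.edgeSet_top] at he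
      have hab : a ≠ b := by simpa using he
      have hset : {i | s(a, b) ∈ Sym2.map ⇑ψ '' HamDecomp.D m (ι i)}
          = ⇑ι.symm '' {j | s(ψ.symm a, ψ.symm b) ∈ HamDecomp.D m j} := by
        ext i
        simp only [Set.mem_setOf_eq]
        rw [HamDecomp.mem_map_image ψ]
        simp only [Set.mem_image, Set.mem_setOf_eq]
        constructor
        · intro h
          exact ⟨ι i, h, by simp⟩
        · rintro ⟨j, hj, rfl⟩
          simpa using hj
      rw [hset, Set.ncard_image_of_injective _ ι.symm.injective]
      exact HamDecomp.count hm _ _ (ψ.symm.injective.ne hab)
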